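/- Assume d ≥ p(J) and α_j > 0, β_j > 0 for all j ∈ J. Let X* = (e, t, δ, x) ∈ P¹ with δ ∈ {0,1}^J. If X* is an extreme point of P¹ and g_{α,β}(e,t) ≤ g_{α,β}(e',t') for every (e',t',δ',x') ∈ P¹ with δ' ∈ {0,1}^J, then the schedule C* defined by C*_j = d − e_j + t_j is a d-block, i.e. a feasible schedule without idle time (max_j C*_j − min_j (C*_j − p_j) = p(J)) containing an on-time task (some j with C*_j = d). -/

import Mathlib

/-- `g_p(S) = ½(∑_{j∈S} p_j)² + ½ ∑_{j∈S} p_j²`. -/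
noncomputable def gp {J : Type*} (p : J → ℝ) (S : Finset J) : ℝ :=
  (∑ j ∈ S, p j) ^ 2 / 2 + (∑ j ∈ S, (p j) ^ 2) / 2

/-- Sum over the ordered pairs `S^< = {(i,j) ∈ S² : i < j}`. -/
def pairSum {J : Type*} [LinearOrder J] (S : Finset J) (f : J → J → ℝ) : ℝ :=
  ∑ i ∈ S, ∑ j ∈ S.filter (fun j => i < j), f i j

/-- Membership in the polyhedron `P¹`: the constraints (e0–t1) on `e,t`,
`δ ∈ [0,1]^J`, the linearization constraints (x1–x4), and the non-overlapping
inequalities (S1) and (S2). -/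
def memP1 {J : Type*} [Fintype J] [LinearOrder J]
    (p : J → ℝ) (e t δ : J → ℝ) (x : J → J → ℝ) : Prop :=
  (∀ j, 0 ≤ δ j ∧ δ j ≤ 1) ∧
  (∀ j, 0 ≤ e j) ∧ (∀ j, e j ≤ δ j * ((∑ k, p k) - p j)) ∧
  (∀ j, 0 ≤ t j) ∧ (∀ j, t j ≤ (1 - δ j) * (∑ k, p k)) ∧
  (∀ i j : J, i < j →
    x i j ≥ δ i - δ j ∧ x i j ≥ δ j - δ i ∧
    x i j ≤ δ i + δ j ∧ x i j ≤ 2 - (δ i + δ j)) ∧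
  (∀ S : Finset J,
    ∑ i ∈ S, p i * e i ≥ pairSum S (fun i j => p i * p j * (δ i + δ j - x i j) / 2)) ∧
  (∀ S : Finset J,
    ∑ i ∈ S, p i * t i ≥
      pairSum S (fun i j => p i * p j * (2 - (δ i + δ j) - x i j) / 2)
        + ∑ i ∈ S, (p i) ^ 2 * (1 - δ i))

open Finset

/-- A feasible schedule: positivity and non-overlapping. -/
def Feasible {J : Type*} (p C : J → ℝ) : Prop :=
  (∀ j, p j ≤ C j) ∧ ∀ i j : J, i ≠ j → C j ≥ C i + p j ∨ C i ≥ C j + p i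

/-- A block: a feasible schedule without idle time. -/
def IsBlock {J : Type*} [Fintype J] [Nonempty J] (p C : J → ℝ) : Prop :=
  Feasible p C ∧
    (univ.sup' univ_nonempty C - univ.inf' univ_nonempty (fun j => C j - p j)) = ∑ j, p j

/-- `X = (e,t,δ,x)` is an extreme point of `P¹`: it belongs to `P¹` and is not the
midpoint of two distinct points of `P¹` (the `x` coordinates are only meaningful on
the pairs `i < j`). -/
def isExtremeP1 {J : Type*} [Fintype J] [LinearOrder J]
    (p : J → ℝ) (e t δ : J → ℝ) (x : J → J → ℝ) : Prop :=
  memP1 p e t δ x ∧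
  ∀ e₁ t₁ δ₁ x₁ e₂ t₂ δ₂ x₂, memP1 p e₁ t₁ δ₁ x₁ → memP1 p e₂ t₂ δ₂ x₂ →
    (∀ j, e j = (e₁ j + e₂ j) / 2) → (∀ j, t j = (t₁ j + t₂ j) / 2) →
    (∀ j, δ j = (δ₁ j + δ₂ j) / 2) →
    (∀ i j : J, i < j → x i j = (x₁ i j + x₂ i j) / 2) →
    (e₁ = e₂ ∧ t₁ = t₂ ∧ δ₁ = δ₂ ∧ ∀ i j : J, i < j → x₁ i j = x₂ i j)

section prelim
variable {J : Type*} [LinearOrder J]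

/-- the square expansion -/
lemma sq_sum_eq (p : J → ℝ) (A : Finset J) :
    (∑ i ∈ A, p i) ^ 2 = ∑ i ∈ A, (p i) ^ 2 + 2 * pairSum A (fun i j => p i * p j) := by
  classical
  have h1 : (∑ i ∈ A, p i) ^ 2 = ∑ q ∈ A ×ˢ A, p q.1 * p q.2 := by
    rw [sq, Finset.sum_mul_sum, Finset.sum_product]
  have hsplit : ∑ q ∈ A ×ˢ A, p q.1 * p q.2 =
      (∑ q ∈ (A ×ˢ A).filter (fun q => q.1 < q.2), p q.1 * p q.2) +
      ((∑ q ∈ ((A ×ˢ A).filter (fun q => ¬ q.1 < q.2)).filter (fun q => q.2 < q.1), p q.1 * p q.2) +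
       ∑ q ∈ ((A ×ˢ A).filter (fun q => ¬ q.1 < q.2)).filter (fun q => ¬ q.2 < q.1), p q.1 * p q.2) := by
    rw [Finset.sum_filter_add_sum_filter_not ((A ×ˢ A).filter (fun q => ¬ q.1 < q.2)) (fun q => q.2 < q.1)]
    rw [Finset.sum_filter_add_sum_filter_not (A ×ˢ A) (fun q => q.1 < q.2)]
  have hlt : ∀ (g : J → J → ℝ), (∑ q ∈ (A ×ˢ A).filter (fun q => q.1 < q.2), g q.1 q.2)
      = pairSum A g := by
    intro g
    rw [pairSum, Finset.sum_sigma']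
    refine Finset.sum_nbij' (fun q => ⟨q.1, q.2⟩) (fun q => (q.1, q.2)) ?_ ?_ ?_ ?_ ?_
    · intro a ha
      simp only [Finset.mem_filter, Finset.mem_product, Finset.mem_sigma] at ha ⊢
      exact ⟨ha.1.1, ha.1.2, ha.2⟩
    · intro a ha
      simp only [Finset.mem_filter, Finset.mem_product, Finset.mem_sigma] at ha ⊢
      exact ⟨⟨ha.1, ha.2.1⟩, ha.2.2⟩
    · intro a _; rfl
    · intro a _; rfl
    · intro a _; rfl
  have hgt : (∑ q ∈ ((A ×ˢ A).filter (fun q => ¬ q.1 < q.2)).filter (fun q => q.2 < q.1), p q.1 * p q.2)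
      = pairSum A (fun i j => p i * p j) := by
    rw [← hlt (fun i j => p i * p j)]
    refine Finset.sum_nbij' (fun q => (q.2, q.1)) (fun q => (q.2, q.1)) ?_ ?_ ?_ ?_ ?_
    · intro a ha
      simp only [Finset.mem_filter, Finset.mem_product] at ha ⊢
      exact ⟨⟨ha.1.1.2, ha.1.1.1⟩, ha.2⟩
    · intro a ha
      simp only [Finset.mem_filter, Finset.mem_product] at ha ⊢
      exact ⟨⟨⟨ha.1.2, ha.1.1⟩, not_lt.mpr (le_of_lt ha.2)⟩, ha.2⟩
    · intro a _; rfl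
    · intro a _; rfl
    · intro a _; ring
  have hdiag : (∑ q ∈ ((A ×ˢ A).filter (fun q => ¬ q.1 < q.2)).filter (fun q => ¬ q.2 < q.1), p q.1 * p q.2)
      = ∑ i ∈ A, (p i) ^ 2 := by
    refine Finset.sum_nbij' (fun q => q.1) (fun i => (i, i)) ?_ ?_ ?_ ?_ ?_
    · intro a ha
      simp only [Finset.mem_filter, Finset.mem_product] at ha
      exact ha.1.1.1
    · intro a ha
      simp only [Finset.mem_filter, Finset.mem_product]
      exact ⟨⟨⟨ha, ha⟩, lt_irrefl a⟩, lt_irrefl a⟩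
    · intro a ha
      simp only [Finset.mem_filter, Finset.mem_product, not_lt] at ha
      have h2 : a.2 = a.1 := le_antisymm ha.1.2 ha.2
      ext <;> simp [h2]
    · intro a _; rfl
    · intro a ha
      simp only [Finset.mem_filter, Finset.mem_product, not_lt] at ha
      have h2 : a.2 = a.1 := le_antisymm ha.1.2 ha.2
      rw [h2]; ring
  rw [h1, hsplit, hlt (fun i j => p i * p j), hgt, hdiag]; ring


/-- generalized set function for both sides: `c = 1` (tardy) or `c = -1` (early). -/
noncomputable def gq (p : J → ℝ) (c : ℝ) (S : Finset J) : ℝ :=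
  ((∑ i ∈ S, p i) ^ 2 + c * ∑ i ∈ S, (p i) ^ 2) / 2

lemma gq_empty (p : J → ℝ) (c : ℝ) : gq p c ∅ = 0 := by simp [gq]

lemma pairSum_eq_gq (p : J → ℝ) (A : Finset J) :
    pairSum A (fun i j => p i * p j) = gq p (-1) A := by
  have := sq_sum_eq p A
  rw [gq]; linarith

lemma gq_singleton (p : J → ℝ) (c : ℝ) (j : J) :
    gq p c {j} = (1 + c) / 2 * (p j) ^ 2 := by
  simp [gq]; ring

lemma gq_union_inter (p : J → ℝ) (c : ℝ) (A B : Finset J) [DecidableEq J] :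
    gq p c (A ∪ B) + gq p c (A ∩ B)
      = gq p c A + gq p c B + (∑ i ∈ A \ B, p i) * (∑ i ∈ B \ A, p i) := by
  have h1 : ∀ (f : J → ℝ), ∑ i ∈ A ∪ B, f i + ∑ i ∈ A ∩ B, f i = ∑ i ∈ A, f i + ∑ i ∈ B, f i :=
    fun f => Finset.sum_union_inter
  have h2 : ∑ i ∈ A \ B, p i = ∑ i ∈ A ∪ B, p i - ∑ i ∈ B, p i := by
    rw [← Finset.sum_sdiff (Finset.subset_union_right (s₁ := A) (s₂ := B))]
    simp [Finset.union_sdiff_right]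
  have h3 : ∑ i ∈ B \ A, p i = ∑ i ∈ A ∪ B, p i - ∑ i ∈ A, p i := by
    rw [← Finset.sum_sdiff (Finset.subset_union_left (s₁ := A) (s₂ := B))]
    simp [Finset.union_sdiff_left]
  have hp := h1 p
  have hp2 := h1 (fun i => (p i) ^ 2)
  simp only [gq, h2, h3]
  have : ∑ i ∈ A ∩ B, p i = ∑ i ∈ A, p i + ∑ i ∈ B, p i - ∑ i ∈ A ∪ B, p i := by linarith
  rw [this]
  have h4 : ∑ i ∈ A ∩ B, (fun i => (p i)^2) i = ∑ i ∈ A, (p i)^2 + ∑ i ∈ B, (p i)^2 - ∑ i ∈ A ∪ B, (p i)^2 := by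
    linarith
  simp only at h4
  rw [h4]; ring

lemma gq_erase (p : J → ℝ) (c : ℝ) (S : Finset J) (j : J) (hj : j ∈ S) [DecidableEq J] :
    gq p c S = gq p c (S.erase j) + p j * (∑ i ∈ S.erase j, p i) + (1 + c) / 2 * (p j) ^ 2 := by
  have h1 : ∑ i ∈ S, p i = p j + ∑ i ∈ S.erase j, p i := (Finset.add_sum_erase S p hj).symm
  have h2 : ∑ i ∈ S, (p i) ^ 2 = (p j) ^ 2 + ∑ i ∈ S.erase j, (p i) ^ 2 :=
    (Finset.add_sum_erase S (fun i => (p i) ^ 2) hj).symm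
  rw [gq, gq, h1, h2]; ring

end prelim

set_option linter.unusedSectionVars false

section tight
variable {J : Type*} [LinearOrder J]

/-- `S` is a tight set for the system `∀ S ⊆ V, ∑_{i∈S} p_i y_i ≥ gq p c S`. -/
def TightSet (p : J → ℝ) (V : Finset J) (y : J → ℝ) (c : ℝ) (S : Finset J) : Prop :=
  S ⊆ V ∧ ∑ i ∈ S, p i * y i = gq p c S

variable {p : J → ℝ} {V : Finset J} {y : J → ℝ} {c : ℝ}

lemma tightSet_empty : TightSet p V y c ∅ := by
  refine ⟨Finset.empty_subset _, by simp [gq_empty]⟩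

lemma tight_comparable (hp : ∀ j, 0 < p j)
    (hcon : ∀ S ⊆ V, gq p c S ≤ ∑ i ∈ S, p i * y i)
    {A B : Finset J} (hA : TightSet p V y c A) (hB : TightSet p V y c B) :
    A ⊆ B ∨ B ⊆ A := by
  classical
  by_contra h
  push_neg at h
  obtain ⟨h1, h2⟩ := h
  have hAB : (A \ B).Nonempty := by
    rw [Finset.sdiff_nonempty]; exact h1
  have hBA : (B \ A).Nonempty := by
    rw [Finset.sdiff_nonempty]; exact h2
  have hposA : 0 < ∑ i ∈ A \ B, p i := Finset.sum_pos (fun i _ => hp i) hAB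
  have hposB : 0 < ∑ i ∈ B \ A, p i := Finset.sum_pos (fun i _ => hp i) hBA
  have hsum : ∑ i ∈ A ∪ B, p i * y i + ∑ i ∈ A ∩ B, p i * y i
      = ∑ i ∈ A, p i * y i + ∑ i ∈ B, p i * y i := Finset.sum_union_inter
  have hU : gq p c (A ∪ B) ≤ ∑ i ∈ A ∪ B, p i * y i :=
    hcon _ (Finset.union_subset hA.1 hB.1)
  have hI : gq p c (A ∩ B) ≤ ∑ i ∈ A ∩ B, p i * y i :=
    hcon _ ((Finset.inter_subset_left).trans hA.1)
  have hui := gq_union_inter p c A B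
  have e1 := hA.2
  have e2 := hB.2
  nlinarith [mul_pos hposA hposB]

lemma tight_mem_le (hcon : ∀ S ⊆ V, gq p c S ≤ ∑ i ∈ S, p i * y i)
    {A : Finset J} (hA : TightSet p V y c A) {j : J} (hj : j ∈ A) :
    p j * y j ≤ p j * (∑ i ∈ A.erase j, p i) + (1 + c) / 2 * (p j) ^ 2 := by
  classical
  have h1 : ∑ i ∈ A, p i * y i = p j * y j + ∑ i ∈ A.erase j, p i * y i :=
    (Finset.add_sum_erase A (fun i => p i * y i) hj).symm
  have h2 : gq p c (A.erase j) ≤ ∑ i ∈ A.erase j, p i * y i :=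
    hcon _ ((Finset.erase_subset j A).trans hA.1)
  have h3 := gq_erase p c A j hj
  have e := hA.2
  linarith

lemma tight_mem_lt (hcon : ∀ S ⊆ V, gq p c S ≤ ∑ i ∈ S, p i * y i)
    {A : Finset J} (hA : TightSet p V y c A) {j : J} (hj : j ∈ A)
    (hne : ¬ TightSet p V y c (A.erase j)) :
    p j * y j < p j * (∑ i ∈ A.erase j, p i) + (1 + c) / 2 * (p j) ^ 2 := by
  classical
  have h1 : ∑ i ∈ A, p i * y i = p j * y j + ∑ i ∈ A.erase j, p i * y i :=
    (Finset.add_sum_erase A (fun i => p i * y i) hj).symm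
  have hsub : A.erase j ⊆ V := (Finset.erase_subset j A).trans hA.1
  have h2 : gq p c (A.erase j) ≤ ∑ i ∈ A.erase j, p i * y i := hcon _ hsub
  have h2' : gq p c (A.erase j) ≠ ∑ i ∈ A.erase j, p i * y i := by
    intro h; exact hne ⟨hsub, h.symm⟩
  have h2'' : gq p c (A.erase j) < ∑ i ∈ A.erase j, p i * y i := lt_of_le_of_ne h2 h2'
  have h3 := gq_erase p c A j hj
  have e := hA.2
  linarith

lemma tight_erase_val
    {A : Finset J} (hA : TightSet p V y c A) {j : J} (hj : j ∈ A)
    (he : TightSet p V y c (A.erase j)) :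
    p j * y j = p j * (∑ i ∈ A.erase j, p i) + (1 + c) / 2 * (p j) ^ 2 := by
  classical
  have h1 : ∑ i ∈ A, p i * y i = p j * y j + ∑ i ∈ A.erase j, p i * y i :=
    (Finset.add_sum_erase A (fun i => p i * y i) hj).symm
  have h3 := gq_erase p c A j hj
  have e := hA.2
  have e2 := he.2
  linarith

lemma exists_min_tight (hp : ∀ j, 0 < p j)
    (hcon : ∀ S ⊆ V, gq p c S ≤ ∑ i ∈ S, p i * y i)
    {j : J} (hj : ∃ S, TightSet p V y c S ∧ j ∈ S) :
    ∃ A, TightSet p V y c A ∧ j ∈ A ∧ ∀ S, TightSet p V y c S → j ∈ S → A ⊆ S := by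
  classical
  obtain ⟨S₀, hS₀, hjS₀⟩ := hj
  have hne : (V.powerset.filter (fun S => TightSet p V y c S ∧ j ∈ S)).Nonempty :=
    ⟨S₀, by simp only [Finset.mem_filter, Finset.mem_powerset]; exact ⟨hS₀.1, hS₀, hjS₀⟩⟩
  obtain ⟨A, hA, hmin⟩ := Finset.exists_min_image _ (fun S => S.card) hne
  simp only [Finset.mem_filter, Finset.mem_powerset] at hA
  refine ⟨A, hA.2.1, hA.2.2, fun S hS hjS => ?_⟩
  rcases tight_comparable hp hcon hA.2.1 hS with h | h
  · exact h
  · have hc : A.card ≤ S.card := by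
      have := hmin S (by simp only [Finset.mem_filter, Finset.mem_powerset]; exact ⟨hS.1, hS, hjS⟩)
      simpa using this
    exact (Finset.eq_of_subset_of_card_le h hc).ge

lemma chain_max (s : Finset J) (hs : s.Nonempty) (M : J → Finset J)
    (hcomp : ∀ a ∈ s, ∀ b ∈ s, M a ⊆ M b ∨ M b ⊆ M a) :
    ∃ a ∈ s, ∀ b ∈ s, M b ⊆ M a := by
  obtain ⟨a, ha, hmax⟩ := Finset.exists_max_image s (fun a => (M a).card) hs
  refine ⟨a, ha, fun b hb => ?_⟩
  rcases hcomp b hb a ha with h | h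
  · exact h
  · rw [Finset.eq_of_subset_of_card_le h (hmax b hb)]

lemma sum_p_mono {p : J → ℝ} (hp : ∀ j, 0 < p j) {S R : Finset J} (h : S ⊆ R) :
    ∑ i ∈ S, p i ≤ ∑ i ∈ R, p i :=
  Finset.sum_le_sum_of_subset_of_nonneg h (fun i _ _ => (hp i).le)

lemma sum_p_strict_mono {p : J → ℝ} (hp : ∀ j, 0 < p j) {S R : Finset J}
    (h : S ⊆ R) (hne : S ≠ R) : ∑ i ∈ S, p i < ∑ i ∈ R, p i := by
  classical
  obtain ⟨a, haR, haS⟩ := Finset.exists_of_ssubset (lt_of_le_of_ne h hne)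
  calc ∑ i ∈ S, p i < ∑ i ∈ S, p i + p a := by linarith [hp a]
    _ = ∑ i ∈ insert a S, p i := by rw [Finset.sum_insert haS]; ring
    _ ≤ ∑ i ∈ R, p i := sum_p_mono hp (Finset.insert_subset haR h)

lemma exists_slack (hcon : ∀ S ⊆ V, gq p c S ≤ ∑ i ∈ S, p i * y i) :
    ∃ ε : ℝ, 0 < ε ∧ ∀ S ⊆ V, ∑ i ∈ S, p i * y i ≠ gq p c S →
      gq p c S + ε ≤ ∑ i ∈ S, p i * y i := by
  classical
  set F := V.powerset.filter (fun S => ∑ i ∈ S, p i * y i ≠ gq p c S) with hF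
  by_cases hne : F.Nonempty
  · refine ⟨F.inf' hne (fun S => ∑ i ∈ S, p i * y i - gq p c S), ?_, ?_⟩
    · rw [Finset.lt_inf'_iff]
      intro S hS
      rw [hF, Finset.mem_filter, Finset.mem_powerset] at hS
      rcases lt_or_eq_of_le (hcon S hS.1) with h | h
      · linarith
      · exact absurd h.symm hS.2
    · intro S hSV hSne
      have hmem : S ∈ F := by
        rw [hF, Finset.mem_filter, Finset.mem_powerset]; exact ⟨hSV, hSne⟩
      have := Finset.inf'_le (fun S => ∑ i ∈ S, p i * y i - gq p c S) hmem
      linarith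
  · refine ⟨1, one_pos, fun S hSV hSne => ?_⟩
    exact absurd ⟨S, by rw [hF, Finset.mem_filter, Finset.mem_powerset]; exact ⟨hSV, hSne⟩⟩ hne

lemma exists_partner (hp : ∀ j, 0 < p j)
    (hcon : ∀ S ⊆ V, gq p c S ≤ ∑ i ∈ S, p i * y i)
    {A : Finset J} {j : J} (hA : TightSet p V y c A) (hj : j ∈ A)
    (hcover : ∀ l ∈ V, ∃ S, TightSet p V y c S ∧ l ∈ S)
    (hjmin : ∀ S, TightSet p V y c S → j ∈ S → A ⊆ S)
    (hnot : ¬ TightSet p V y c (A.erase j)) :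
    ∃ k ∈ A, k ≠ j ∧ ∀ S, TightSet p V y c S → k ∈ S → A ⊆ S := by
  classical
  have hene : (A.erase j).Nonempty := by
    rcases Finset.eq_empty_or_nonempty (A.erase j) with h | h
    · exact absurd (h ▸ tightSet_empty) hnot
    · exact h
  have hMex : ∀ l, ∃ B, l ∈ A.erase j →
      (TightSet p V y c B ∧ l ∈ B ∧ ∀ S, TightSet p V y c S → l ∈ S → B ⊆ S) := by
    intro l
    by_cases hl : l ∈ A.erase j
    · obtain ⟨B, hB⟩ := exists_min_tight hp hcon
        (hcover l (hA.1 (Finset.mem_of_mem_erase hl)))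
      exact ⟨B, fun _ => hB⟩
    · exact ⟨∅, fun h => absurd h hl⟩
  choose M hM using hMex
  obtain ⟨a, ha, hamax⟩ := chain_max (A.erase j) hene M (fun a ha b hb =>
    tight_comparable hp hcon (hM a ha).1 (hM b hb).1)
  obtain ⟨hMa, haMa, hamin⟩ := hM a ha
  have hMaA : M a ⊆ A := hamin A hA (Finset.mem_of_mem_erase ha)
  by_cases hcase : M a = A
  · exact ⟨a, Finset.mem_of_mem_erase ha, Finset.ne_of_mem_erase ha, hcase ▸ hamin⟩
  · exfalso
    have hjMa : j ∉ M a := fun hjin => hcase (le_antisymm hMaA (hjmin (M a) hMa hjin))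
    have hsub : A.erase j ⊆ M a := by
      intro l hl
      exact hamax l hl ((hM l hl).2.1)
    have : M a = A.erase j := le_antisymm
      (fun l hl => Finset.mem_erase.mpr ⟨fun h => hjMa (by rw [← h]; exact hl), hMaA hl⟩) hsub
    exact hnot (this ▸ hMa)

end tight

section reduce
variable {J : Type*} [Fintype J] [LinearOrder J]

lemma sum_mul_delta {δ : J → ℝ} (hδ01 : ∀ j, δ j = 0 ∨ δ j = 1)
    (A : Finset J) (F : J → ℝ) :
    ∑ j ∈ A, F j * δ j = ∑ j ∈ A.filter (fun j => δ j = 1), F j := by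
  classical
  rw [Finset.sum_filter]
  refine Finset.sum_congr rfl (fun j _ => ?_)
  rcases hδ01 j with h | h <;> simp [h]

lemma sum_mul_delta' {δ : J → ℝ} (hδ01 : ∀ j, δ j = 0 ∨ δ j = 1)
    (A : Finset J) (F : J → ℝ) :
    ∑ j ∈ A, F j * (1 - δ j) = ∑ j ∈ A.filter (fun j => δ j = 0), F j := by
  classical
  rw [Finset.sum_filter]
  refine Finset.sum_congr rfl (fun j _ => ?_)
  rcases hδ01 j with h | h <;> simp [h]

variable {p e t δ : J → ℝ} {x : J → J → ℝ}

lemma x_forced (hmem : memP1 p e t δ x) (hδ01 : ∀ j, δ j = 0 ∨ δ j = 1) :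
    ∀ i j, i < j → x i j = δ i + δ j - 2 * (δ i * δ j) := by
  intro i j hij
  obtain ⟨-, -, -, -, -, hx, -, -⟩ := hmem
  obtain ⟨h1, h2, h3, h4⟩ := hx i j hij
  rcases hδ01 i with hi | hi <;> rcases hδ01 j with hj | hj <;>
    rw [hi, hj] at h1 h2 h3 h4 ⊢ <;> linarith

lemma reduce1 (hδ01 : ∀ j, δ j = 0 ∨ δ j = 1)
    (hxv : ∀ i j, i < j → x i j = δ i + δ j - 2 * (δ i * δ j)) (S : Finset J) :
    pairSum S (fun i j => p i * p j * (δ i + δ j - x i j) / 2)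
      = gq p (-1) (S.filter (fun j => δ j = 1)) := by
  classical
  rw [← pairSum_eq_gq, pairSum, pairSum]
  have step1 : ∀ i ∈ S, ∑ j ∈ S.filter (fun j => i < j), p i * p j * (δ i + δ j - x i j) / 2
      = (∑ j ∈ (S.filter (fun j => δ j = 1)).filter (fun j => i < j), p i * p j) * δ i := by
    intro i _
    have h1 : ∀ j ∈ S.filter (fun j => i < j),
        p i * p j * (δ i + δ j - x i j) / 2 = (p i * p j * δ i) * δ j := by
      intro j hj
      rw [Finset.mem_filter] at hj
      rw [hxv i j hj.2]; ring
    rw [Finset.sum_congr rfl h1, sum_mul_delta hδ01, Finset.filter_comm, Finset.sum_mul]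
  rw [Finset.sum_congr rfl step1, sum_mul_delta hδ01]

lemma reduce2 (hδ01 : ∀ j, δ j = 0 ∨ δ j = 1)
    (hxv : ∀ i j, i < j → x i j = δ i + δ j - 2 * (δ i * δ j)) (S : Finset J) :
    pairSum S (fun i j => p i * p j * (2 - (δ i + δ j) - x i j) / 2)
        + ∑ i ∈ S, (p i) ^ 2 * (1 - δ i)
      = gq p 1 (S.filter (fun j => δ j = 0)) := by
  classical
  have hsq : ∑ i ∈ S, (p i) ^ 2 * (1 - δ i)
      = ∑ i ∈ S.filter (fun j => δ j = 0), (p i) ^ 2 := sum_mul_delta' hδ01 S _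
  have hps : pairSum S (fun i j => p i * p j * (2 - (δ i + δ j) - x i j) / 2)
      = gq p (-1) (S.filter (fun j => δ j = 0)) := by
    rw [← pairSum_eq_gq, pairSum, pairSum]
    have step1 : ∀ i ∈ S, ∑ j ∈ S.filter (fun j => i < j),
        p i * p j * (2 - (δ i + δ j) - x i j) / 2
        = (∑ j ∈ (S.filter (fun j => δ j = 0)).filter (fun j => i < j), p i * p j) * (1 - δ i) := by
      intro i _
      have h1 : ∀ j ∈ S.filter (fun j => i < j),
          p i * p j * (2 - (δ i + δ j) - x i j) / 2 = (p i * p j * (1 - δ i)) * (1 - δ j) := by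
        intro j hj
        rw [Finset.mem_filter] at hj
        rw [hxv i j hj.2]; ring
      rw [Finset.sum_congr rfl h1, sum_mul_delta' hδ01, Finset.filter_comm, Finset.sum_mul]
    rw [Finset.sum_congr rfl step1, sum_mul_delta' hδ01]
  rw [hps, hsq, gq, gq]
  ring

/-- extraction of the reduced constraints from membership in `P¹`. -/
lemma memP1_reduced (hmem : memP1 p e t δ x) (hδ01 : ∀ j, δ j = 0 ∨ δ j = 1) :
    (∀ S ⊆ Finset.univ.filter (fun j => δ j = 1), gq p (-1) S ≤ ∑ i ∈ S, p i * e i) ∧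
    (∀ S ⊆ Finset.univ.filter (fun j => δ j = 0), gq p 1 S ≤ ∑ i ∈ S, p i * t i) := by
  classical
  have hxv := x_forced hmem hδ01
  obtain ⟨-, -, -, -, -, -, hS1, hS2⟩ := hmem
  constructor
  · intro S hS
    have h1 := hS1 S
    rw [reduce1 hδ01 hxv S] at h1
    have hfe : S.filter (fun j => δ j = 1) = S := by
      refine Finset.filter_true_of_mem (fun j hj => ?_)
      have := hS hj
      rw [Finset.mem_filter] at this
      exact this.2
    rwa [hfe] at h1
  · intro S hS
    have h1 := hS2 S
    rw [reduce2 hδ01 hxv S] at h1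
    have hfe : S.filter (fun j => δ j = 0) = S := by
      refine Finset.filter_true_of_mem (fun j hj => ?_)
      have := hS hj
      rw [Finset.mem_filter] at this
      exact this.2
    rwa [hfe] at h1

/-- building membership in `P¹` from the reduced constraints. -/
lemma memP1_intro (hp : ∀ j, 0 < p j) (hδ01 : ∀ j, δ j = 0 ∨ δ j = 1)
    (hxv : ∀ i j, i < j → x i j = δ i + δ j - 2 * (δ i * δ j))
    (hxc : ∀ i j : J, i < j →
      x i j ≥ δ i - δ j ∧ x i j ≥ δ j - δ i ∧ x i j ≤ δ i + δ j ∧ x i j ≤ 2 - (δ i + δ j))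
    (he0 : ∀ j, 0 ≤ e j) (he1 : ∀ j, e j ≤ δ j * ((∑ k, p k) - p j))
    (ht0 : ∀ j, 0 ≤ t j) (ht1 : ∀ j, t j ≤ (1 - δ j) * (∑ k, p k))
    (hce : ∀ S ⊆ Finset.univ.filter (fun j => δ j = 1), gq p (-1) S ≤ ∑ i ∈ S, p i * e i)
    (hct : ∀ S ⊆ Finset.univ.filter (fun j => δ j = 0), gq p 1 S ≤ ∑ i ∈ S, p i * t i) :
    memP1 p e t δ x := by
  classical
  refine ⟨fun j => ?_, he0, he1, ht0, ht1, hxc, fun S => ?_, fun S => ?_⟩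
  · rcases hδ01 j with h | h <;> rw [h] <;> norm_num
  · rw [ge_iff_le, reduce1 hδ01 hxv S]
    calc gq p (-1) (S.filter (fun j => δ j = 1))
        ≤ ∑ i ∈ S.filter (fun j => δ j = 1), p i * e i := by
          refine hce _ (fun j hj => ?_)
          rw [Finset.mem_filter] at hj ⊢
          exact ⟨Finset.mem_univ j, hj.2⟩
      _ ≤ ∑ i ∈ S, p i * e i := by
          refine Finset.sum_le_sum_of_subset_of_nonneg (Finset.filter_subset _ _)
            (fun i _ _ => mul_nonneg (hp i).le (he0 i))
  · rw [ge_iff_le, reduce2 hδ01 hxv S]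
    calc gq p 1 (S.filter (fun j => δ j = 0))
        ≤ ∑ i ∈ S.filter (fun j => δ j = 0), p i * t i := by
          refine hct _ (fun j hj => ?_)
          rw [Finset.mem_filter] at hj ⊢
          exact ⟨Finset.mem_univ j, hj.2⟩
      _ ≤ ∑ i ∈ S, p i * t i := by
          refine Finset.sum_le_sum_of_subset_of_nonneg (Finset.filter_subset _ _)
            (fun i _ _ => mul_nonneg (hp i).le (ht0 i))

end reduce

section helpers
variable {J : Type*} [LinearOrder J]

lemma sum_pert2 (p y : J → ℝ) (j k : J) (u v : ℝ) (S : Finset J)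
    (hpj : p j ≠ 0) (hpk : p k ≠ 0) (hjk : j ≠ k) :
    ∑ i ∈ S, p i * (y i + ((if i = j then u / p j else 0) + (if i = k then v / p k else 0)))
      = ∑ i ∈ S, p i * y i + ((if j ∈ S then u else 0) + (if k ∈ S then v else 0)) := by
  classical
  have h1 : ∀ i ∈ S, p i * (y i + ((if i = j then u / p j else 0) + (if i = k then v / p k else 0)))
      = p i * y i + ((if i = j then u else 0) + (if i = k then v else 0)) := by
    intro i _
    by_cases hij : i = j
    · subst hij
      rw [if_pos rfl, if_pos rfl, if_neg hjk, if_neg hjk]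
      field_simp; ring
    · by_cases hik : i = k
      · subst hik
        rw [if_neg hij, if_pos rfl, if_neg hij, if_pos rfl]
        field_simp; ring
      · simp [hij, hik]
  rw [Finset.sum_congr rfl h1, Finset.sum_add_distrib, Finset.sum_add_distrib]
  congr 1
  congr 1 <;> simp [Finset.sum_ite_eq']

lemma sum_pert1 (p y : J → ℝ) (j : J) (u : ℝ) (S : Finset J) (hpj : p j ≠ 0) :
    ∑ i ∈ S, p i * (y i + (if i = j then u / p j else 0))
      = ∑ i ∈ S, p i * y i + (if j ∈ S then u else 0) := by
  classical
  have h1 : ∀ i ∈ S, p i * (y i + (if i = j then u / p j else 0))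
      = p i * y i + (if i = j then u else 0) := by
    intro i _
    by_cases hij : i = j
    · subst hij; rw [if_pos rfl, if_pos rfl]; field_simp
    · simp [hij]
  rw [Finset.sum_congr rfl h1, Finset.sum_add_distrib]
  congr 1
  simp [Finset.sum_ite_eq']

end helpers

set_option maxHeartbeats 4000000 in
/-- in the unrestrictive case with positive penalties, an integer
extreme point of `P¹` minimizing `g_{α,β}` over the integer points of `P¹` encodes a
`d`-block: a feasible schedule without idle time having an on-time task. -/
theorem stmt_14 {J : Type*} [Fintype J] [LinearOrder J] [Nonempty J]
    (p : J → ℝ) (hp : ∀ j, 0 < p j)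
    (d : ℝ) (hd : (∑ j, p j) ≤ d)
    (α β : J → ℝ) (hα : ∀ j, 0 < α j) (hβ : ∀ j, 0 < β j)
    (e t δ : J → ℝ) (x : J → J → ℝ)
    (hδ01 : ∀ j, δ j = 0 ∨ δ j = 1)
    (hext : isExtremeP1 p e t δ x)
    (hmin : ∀ (e' t' δ' : J → ℝ) (x' : J → J → ℝ),
      memP1 p e' t' δ' x' → (∀ j, δ' j = 0 ∨ δ' j = 1) →
      (∑ j, (α j * e j + β j * t j)) ≤ ∑ j, (α j * e' j + β j * t' j)) :
    IsBlock p (fun j => d - e j + t j) ∧ ∃ j, d - e j + t j = d := by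
  classical
  obtain ⟨hmem, hexc⟩ := hext
  have hmemc := hmem
  obtain ⟨hδb, he0, he1, ht0, ht1, hxc, hS1, hS2⟩ := hmemc
  set P : ℝ := ∑ k, p k with hPdef
  have hP0 : 0 < P := Finset.sum_pos (fun i _ => hp i) Finset.univ_nonempty
  have hPub : ∀ j, p j ≤ P := fun j =>
    Finset.single_le_sum (fun i _ => (hp i).le) (Finset.mem_univ j)
  set E : Finset J := Finset.univ.filter (fun j => δ j = 1) with hEdef
  set T : Finset J := Finset.univ.filter (fun j => δ j = 0) with hTdef
  have hmemE : ∀ j, j ∈ E ↔ δ j = 1 := by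
    intro j; rw [hEdef, Finset.mem_filter]; simp
  have hmemT : ∀ j, j ∈ T ↔ δ j = 0 := by
    intro j; rw [hTdef, Finset.mem_filter]; simp
  have hjET : ∀ j, j ∈ E ∨ j ∈ T := fun j => (hδ01 j).elim
    (fun h => Or.inr ((hmemT j).mpr h)) (fun h => Or.inl ((hmemE j).mpr h))
  have hET : ∀ j, j ∈ E → j ∉ T := by
    intro j hjE hjT
    rw [hmemE] at hjE; rw [hmemT] at hjT
    rw [hjE] at hjT; exact one_ne_zero hjT
  have heT : ∀ j ∈ T, e j = 0 := by
    intro j hj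
    have h1 := he1 j
    rw [(hmemT j).mp hj] at h1
    have := he0 j
    simp at h1; linarith
  have htE : ∀ j ∈ E, t j = 0 := by
    intro j hj
    have h1 := ht1 j
    rw [(hmemE j).mp hj] at h1
    have := ht0 j
    simp at h1; linarith
  have hxv := x_forced hmem hδ01
  obtain ⟨hce, hct⟩ := memP1_reduced hmem hδ01
  rw [← hEdef] at hce
  rw [← hTdef] at hct
  have hsplit : P = ∑ j ∈ E, p j + ∑ j ∈ T, p j := by
    have h1 := Finset.sum_filter_add_sum_filter_not Finset.univ (fun j => δ j = 1) p
    have h2 : Finset.univ.filter (fun j => ¬ δ j = 1) = T := by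
      rw [hTdef]
      apply Finset.filter_congr
      intro j _
      rcases hδ01 j with h | h <;> simp [h]
    rw [h2] at h1
    rw [hPdef, ← h1, ← hEdef]
  -- tardiness is at least processing time on T
  have htlb : ∀ j ∈ T, p j ≤ t j := by
    intro j hj
    have h := hct {j} (Finset.singleton_subset_iff.mpr hj)
    rw [gq] at h
    simp at h
    nlinarith [hp j]
  -- Step A : every tardy task lies in a tight set
  have hcovT : ∀ j ∈ T, ∃ S, TightSet p T t 1 S ∧ j ∈ S := by
    intro j hjT
    by_contra hno
    push_neg at hno
    obtain ⟨ε₀, hε₀, hslack⟩ := exists_slack hct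
    have htj := htlb j hjT
    have hpj := hp j
    set ε := min ε₀ (p j * t j) with hεdef
    have hε : 0 < ε := lt_min hε₀ (mul_pos hpj (lt_of_lt_of_le hpj htj))
    have hεle₀ : ε ≤ ε₀ := min_le_left _ _
    have hεle : ε ≤ p j * t j := min_le_right _ _
    set t' : J → ℝ := fun l => t l + (if l = j then -ε / p j else 0) with ht'def
    have hsum' : ∀ S : Finset J,
        ∑ i ∈ S, p i * t' i = ∑ i ∈ S, p i * t i + (if j ∈ S then -ε else 0) :=
      fun S => sum_pert1 p t j (-ε) S (ne_of_gt hpj)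
    have hdiv : ε / p j ≤ t j := by
      rw [div_le_iff₀ hpj]; nlinarith
    have hdivpos : 0 < ε / p j := div_pos hε hpj
    have ht'0 : ∀ l, 0 ≤ t' l := by
      intro l
      by_cases hl : l = j
      · subst hl; simp only [ht'def, if_pos rfl, ite_true, neg_div]; linarith
      · simp only [ht'def, if_neg hl]; linarith [ht0 l]
    have ht'1 : ∀ l, t' l ≤ (1 - δ l) * P := by
      intro l
      by_cases hl : l = j
      · subst hl; simp only [ht'def, if_pos rfl, ite_true, neg_div]; linarith [ht1 l]
      · simp only [ht'def, if_neg hl]; linarith [ht1 l]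
    have hct' : ∀ S ⊆ T, gq p 1 S ≤ ∑ i ∈ S, p i * t' i := by
      intro S hS
      rw [hsum' S]
      by_cases hjS : j ∈ S
      · rw [if_pos hjS]
        have hnt : ∑ i ∈ S, p i * t i ≠ gq p 1 S := fun heq => hno S ⟨hS, heq⟩ hjS
        linarith [hslack S hS hnt]
      · rw [if_neg hjS]
        linarith [hct S hS]
    have hmem' : memP1 p e t' δ x :=
      memP1_intro hp hδ01 hxv hxc he0 he1 ht'0 ht'1 hce hct'
    have hmin' := hmin e t' δ x hmem' hδ01
    have hlt : ∑ l, (α l * e l + β l * t' l) < ∑ l, (α l * e l + β l * t l) := by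
      apply Finset.sum_lt_sum
      · intro l _
        by_cases hl : l = j
        · subst hl
          have h1 : t' l ≤ t l := by
            simp only [ht'def, if_pos rfl, ite_true, neg_div]; linarith
          nlinarith [hβ l]
        · simp [ht'def, if_neg hl]
      · refine ⟨j, Finset.mem_univ j, ?_⟩
        have h1 : t' j < t j := by
          simp only [ht'def, if_pos rfl, ite_true, neg_div]; linarith
        nlinarith [hβ j]
    linarith
  -- Step A' : every early task lies in a tight set
  have hcovE : ∀ j ∈ E, ∃ S, TightSet p E e (-1) S ∧ j ∈ S := by
    intro j hjE
    by_cases hej : e j = 0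
    · refine ⟨{j}, ⟨Finset.singleton_subset_iff.mpr hjE, ?_⟩, Finset.mem_singleton_self j⟩
      rw [gq_singleton, Finset.sum_singleton, hej]
      ring
    · have hej' : 0 < e j := lt_of_le_of_ne (he0 j) (Ne.symm hej)
      by_contra hno
      push_neg at hno
      obtain ⟨ε₀, hε₀, hslack⟩ := exists_slack hce
      have hpj := hp j
      set ε := min ε₀ (p j * e j) with hεdef
      have hε : 0 < ε := lt_min hε₀ (mul_pos hpj hej')
      have hεle₀ : ε ≤ ε₀ := min_le_left _ _
      have hεle : ε ≤ p j * e j := min_le_right _ _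
      set e' : J → ℝ := fun l => e l + (if l = j then -ε / p j else 0) with he'def
      have hsum' : ∀ S : Finset J,
          ∑ i ∈ S, p i * e' i = ∑ i ∈ S, p i * e i + (if j ∈ S then -ε else 0) :=
        fun S => sum_pert1 p e j (-ε) S (ne_of_gt hpj)
      have hdiv : ε / p j ≤ e j := by
        rw [div_le_iff₀ hpj]; nlinarith
      have hdivpos : 0 < ε / p j := div_pos hε hpj
      have he'0 : ∀ l, 0 ≤ e' l := by
        intro l
        by_cases hl : l = j
        · subst hl; simp only [he'def, if_pos rfl, ite_true, neg_div]; linarith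
        · simp only [he'def, if_neg hl]; linarith [he0 l]
      have he'1 : ∀ l, e' l ≤ δ l * (P - p l) := by
        intro l
        by_cases hl : l = j
        · subst hl; simp only [he'def, if_pos rfl, ite_true, neg_div]; linarith [he1 l]
        · simp only [he'def, if_neg hl]; linarith [he1 l]
      have hce' : ∀ S ⊆ E, gq p (-1) S ≤ ∑ i ∈ S, p i * e' i := by
        intro S hS
        rw [hsum' S]
        by_cases hjS : j ∈ S
        · rw [if_pos hjS]
          have hnt : ∑ i ∈ S, p i * e i ≠ gq p (-1) S := fun heq => hno S ⟨hS, heq⟩ hjS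
          linarith [hslack S hS hnt]
        · rw [if_neg hjS]
          linarith [hce S hS]
      have hmem' : memP1 p e' t δ x :=
        memP1_intro hp hδ01 hxv hxc he'0 he'1 ht0 ht1 hce' hct
      have hmin' := hmin e' t δ x hmem' hδ01
      have hlt : ∑ l, (α l * e' l + β l * t l) < ∑ l, (α l * e l + β l * t l) := by
        apply Finset.sum_lt_sum
        · intro l _
          by_cases hl : l = j
          · subst hl
            have h1 : e' l ≤ e l := by
              simp only [he'def, if_pos rfl, ite_true, neg_div]; linarith
            nlinarith [hα l]
          · simp [he'def, if_neg hl]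
        · refine ⟨j, Finset.mem_univ j, ?_⟩
          have h1 : e' j < e j := by
            simp only [he'def, if_pos rfl, ite_true, neg_div]; linarith
          nlinarith [hα j]
      linarith
  -- Step B : E is nonempty
  have hEne : E.Nonempty := by
    by_contra hEe
    rw [Finset.not_nonempty_iff_eq_empty] at hEe
    have hTuniv : ∀ j : J, j ∈ T := by
      intro j
      rcases hjET j with h | h
      · rw [hEe] at h; exact absurd h (Finset.notMem_empty j)
      · exact h
    obtain ⟨j₀⟩ := ‹Nonempty J›
    set δ' : J → ℝ := fun l => if l = j₀ then 1 else 0 with hδ'def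
    set e' : J → ℝ := fun _ => 0 with he'def
    set t' : J → ℝ := fun l => if l = j₀ then 0 else t l with ht'def
    set x' : J → J → ℝ := fun i j => δ' i + δ' j - 2 * (δ' i * δ' j) with hx'def
    have hδ01' : ∀ j, δ' j = 0 ∨ δ' j = 1 := by
      intro j
      by_cases h : j = j₀
      · right; simp [hδ'def, h]
      · left; simp [hδ'def, h]
    have hxv' : ∀ i j, i < j → x' i j = δ' i + δ' j - 2 * (δ' i * δ' j) := fun i j _ => rfl
    have hxc' : ∀ i j : J, i < j → x' i j ≥ δ' i - δ' j ∧ x' i j ≥ δ' j - δ' i ∧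
        x' i j ≤ δ' i + δ' j ∧ x' i j ≤ 2 - (δ' i + δ' j) := by
      intro i j _
      rcases hδ01' i with hi | hi <;> rcases hδ01' j with hj | hj <;>
        simp only [hx'def, hi, hj] <;> norm_num
    have hfiltE : Finset.univ.filter (fun l => δ' l = 1) = {j₀} := by
      ext l
      by_cases h : l = j₀ <;> simp [hδ'def, h]
    have he'0 : ∀ l, (0:ℝ) ≤ e' l := fun l => le_refl 0
    have he'1 : ∀ l, e' l ≤ δ' l * (P - p l) := by
      intro l
      by_cases h : l = j₀
      · subst h
        simp only [he'def, hδ'def, if_pos rfl, ite_true, one_mul]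
        linarith [hPub l]
      · simp [he'def, hδ'def, h]
    have ht'0 : ∀ l, 0 ≤ t' l := by
      intro l
      by_cases h : l = j₀
      · simp [ht'def, h]
      · simp only [ht'def, if_neg h]; exact ht0 l
    have ht'1 : ∀ l, t' l ≤ (1 - δ' l) * P := by
      intro l
      by_cases h : l = j₀
      · subst h; simp [ht'def, hδ'def]
      · have hδl : δ l = 0 := (hmemT l).mp (hTuniv l)
        have := ht1 l
        rw [hδl] at this
        simp only [ht'def, hδ'def, if_neg h]
        linarith
    have hce' : ∀ S ⊆ Finset.univ.filter (fun l => δ' l = 1),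
        gq p (-1) S ≤ ∑ i ∈ S, p i * e' i := by
      intro S hS
      rw [hfiltE] at hS
      rcases Finset.subset_singleton_iff.mp hS with h | h <;> rw [h]
      · simp [gq_empty]
      · rw [gq_singleton, Finset.sum_singleton]
        simp [he'def]
    have hct' : ∀ S ⊆ Finset.univ.filter (fun l => δ' l = 0),
        gq p 1 S ≤ ∑ i ∈ S, p i * t' i := by
      intro S hS
      have hj₀S : j₀ ∉ S := by
        intro hin
        have := hS hin
        rw [Finset.mem_filter] at this
        simp [hδ'def] at this
      have hsame : ∑ i ∈ S, p i * t' i = ∑ i ∈ S, p i * t i := by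
        refine Finset.sum_congr rfl (fun l hl => ?_)
        have hlj : l ≠ j₀ := fun h => hj₀S (h ▸ hl)
        simp [ht'def, hlj]
      rw [hsame]
      exact hct S (fun l _ => hTuniv l)
    have hmem' : memP1 p e' t' δ' x' :=
      memP1_intro hp hδ01' hxv' hxc' he'0 he'1 ht'0 ht'1 hce' hct'
    have hmin' := hmin e' t' δ' x' hmem' hδ01'
    have htj₀ := htlb j₀ (hTuniv j₀)
    have hlt : ∑ l, (α l * e' l + β l * t' l) < ∑ l, (α l * e l + β l * t l) := by
      apply Finset.sum_lt_sum
      · intro l _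
        have hel : e l = 0 := heT l (hTuniv l)
        by_cases h : l = j₀
        · subst h
          simp only [he'def, ht'def, if_pos rfl, hel]
          nlinarith [hβ l, hp l, htlb l (hTuniv l)]
        · simp [he'def, ht'def, h, hel]
      · refine ⟨j₀, Finset.mem_univ _, ?_⟩
        have hel : e j₀ = 0 := heT j₀ (hTuniv j₀)
        simp only [he'def, ht'def, if_pos rfl, hel]
        nlinarith [hβ j₀, hp j₀]
    linarith
  have hTltP : ∑ i ∈ T, p i < P := by
    have := Finset.sum_pos (fun i (_ : i ∈ E) => hp i) hEne
    rw [hsplit]; linarith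
  -- Step C : minimal tight sets
  have hMtex : ∀ j, ∃ A, j ∈ T →
      TightSet p T t 1 A ∧ j ∈ A ∧ ∀ S, TightSet p T t 1 S → j ∈ S → A ⊆ S := by
    intro j
    by_cases hj : j ∈ T
    · obtain ⟨A, hA⟩ := exists_min_tight hp hct (hcovT j hj)
      exact ⟨A, fun _ => hA⟩
    · exact ⟨∅, fun h => absurd h hj⟩
  choose Mt hMt using hMtex
  have hMeex : ∀ j, ∃ A, j ∈ E →
      TightSet p E e (-1) A ∧ j ∈ A ∧ ∀ S, TightSet p E e (-1) S → j ∈ S → A ⊆ S := by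
    intro j
    by_cases hj : j ∈ E
    · obtain ⟨A, hA⟩ := exists_min_tight hp hce (hcovE j hj)
      exact ⟨A, fun _ => hA⟩
    · exact ⟨∅, fun h => absurd h hj⟩
  choose Me hMe using hMeex
  -- Step D : the chains are complete
  have hcompT : ∀ j, j ∈ T → TightSet p T t 1 ((Mt j).erase j) := by
    intro j hjT
    obtain ⟨hA, hjA, hjmin⟩ := hMt j hjT
    by_contra hnot
    obtain ⟨k, hkA, hkj, hkmin⟩ := exists_partner hp hct hA hjA hcovT hjmin hnot
    have hkT : k ∈ T := hA.1 hkA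
    have hpj := hp j
    have hpk := hp k
    have htj := htlb j hjT
    have htk := htlb k hkT
    have hjk : j ≠ k := Ne.symm hkj
    have htubj : t j < P := by
      have h := tight_mem_le hct hA hjA
      have h2 : p j + ∑ i ∈ (Mt j).erase j, p i = ∑ i ∈ Mt j, p i :=
        Finset.add_sum_erase _ p hjA
      have h3 : ∑ i ∈ Mt j, p i ≤ ∑ i ∈ T, p i := sum_p_mono hp hA.1
      have h4 : p j * t j ≤ p j * (∑ i ∈ (Mt j).erase j, p i + p j) := by
        have hr : p j * (∑ i ∈ (Mt j).erase j, p i + p j)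
            = p j * (∑ i ∈ (Mt j).erase j, p i) + (1 + 1) / 2 * p j ^ 2 := by ring
        rw [hr]; exact h
      have h5 : t j ≤ ∑ i ∈ (Mt j).erase j, p i + p j := (mul_le_mul_iff_right₀ hpj).mp h4
      linarith [hTltP]
    have htubk : t k < P := by
      have h := tight_mem_le hct hA hkA
      have h2 : p k + ∑ i ∈ (Mt j).erase k, p i = ∑ i ∈ Mt j, p i :=
        Finset.add_sum_erase _ p hkA
      have h3 : ∑ i ∈ Mt j, p i ≤ ∑ i ∈ T, p i := sum_p_mono hp hA.1
      have h4 : p k * t k ≤ p k * (∑ i ∈ (Mt j).erase k, p i + p k) := by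
        have hr : p k * (∑ i ∈ (Mt j).erase k, p i + p k)
            = p k * (∑ i ∈ (Mt j).erase k, p i) + (1 + 1) / 2 * p k ^ 2 := by ring
        rw [hr]; exact h
      have h5 : t k ≤ ∑ i ∈ (Mt j).erase k, p i + p k := (mul_le_mul_iff_right₀ hpk).mp h4
      linarith [hTltP]
    obtain ⟨ε₀, hε₀, hslack⟩ := exists_slack hct
    obtain ⟨ε, hε, hε1, hε2, hε3, hε4, hε5⟩ :
        ∃ ε : ℝ, 0 < ε ∧ ε ≤ ε₀ ∧ ε ≤ p j * (P - t j) ∧ ε ≤ p k * (P - t k)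
          ∧ ε ≤ p j * t j ∧ ε ≤ p k * t k :=
      ⟨min ε₀ (min (p j * (P - t j)) (min (p k * (P - t k)) (min (p j * t j) (p k * t k)))),
        lt_min hε₀ (lt_min (mul_pos hpj (by linarith)) (lt_min (mul_pos hpk (by linarith))
          (lt_min (mul_pos hpj (by linarith)) (mul_pos hpk (by linarith))))),
        min_le_left _ _,
        le_trans (min_le_right _ _) (min_le_left _ _),
        le_trans (min_le_right _ _) (le_trans (min_le_right _ _) (min_le_left _ _)),
        le_trans (min_le_right _ _) (le_trans (min_le_right _ _)
          (le_trans (min_le_right _ _) (min_le_left _ _))),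
        le_trans (min_le_right _ _) (le_trans (min_le_right _ _)
          (le_trans (min_le_right _ _) (min_le_right _ _)))⟩
    have hdj1 : ε / p j ≤ P - t j := by
      rw [div_le_iff₀ hpj]; linarith [hε2, mul_comm (p j) (P - t j)]
    have hdk1 : ε / p k ≤ P - t k := by
      rw [div_le_iff₀ hpk]; linarith [hε3, mul_comm (p k) (P - t k)]
    have hdj2 : ε / p j ≤ t j := by
      rw [div_le_iff₀ hpj]; linarith [hε4, mul_comm (p j) (t j)]
    have hdk2 : ε / p k ≤ t k := by
      rw [div_le_iff₀ hpk]; linarith [hε5, mul_comm (p k) (t k)]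
    have hdjpos : 0 < ε / p j := div_pos hε hpj
    have hdkpos : 0 < ε / p k := div_pos hε hpk
    set t₁ : J → ℝ := fun l => t l + ((if l = j then ε / p j else 0)
      + (if l = k then (-ε) / p k else 0)) with ht₁def
    set t₂ : J → ℝ := fun l => t l + ((if l = j then (-ε) / p j else 0)
      + (if l = k then ε / p k else 0)) with ht₂def
    have hsum₁ : ∀ S : Finset J, ∑ i ∈ S, p i * t₁ i
        = ∑ i ∈ S, p i * t i + ((if j ∈ S then ε else 0) + (if k ∈ S then -ε else 0)) :=
      fun S => sum_pert2 p t j k ε (-ε) S (ne_of_gt hpj) (ne_of_gt hpk) hjk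
    have hsum₂ : ∀ S : Finset J, ∑ i ∈ S, p i * t₂ i
        = ∑ i ∈ S, p i * t i + ((if j ∈ S then -ε else 0) + (if k ∈ S then ε else 0)) :=
      fun S => sum_pert2 p t j k (-ε) ε S (ne_of_gt hpj) (ne_of_gt hpk) hjk
    have hδTj : δ j = 0 := (hmemT j).mp hjT
    have hδTk : δ k = 0 := (hmemT k).mp hkT
    have ht₁0 : ∀ l, 0 ≤ t₁ l := by
      intro l
      by_cases h1 : l = j
      · subst h1
        simp only [ht₁def, if_pos rfl, ite_true, if_neg hjk]
        linarith [ht0 l, hdjpos]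
      · by_cases h2 : l = k
        · subst h2
          simp only [ht₁def, if_neg h1, if_pos rfl, ite_true]
          rw [neg_div]
          linarith [hdk2]
        · simp only [ht₁def, if_neg h1, if_neg h2]
          linarith [ht0 l]
    have ht₁1 : ∀ l, t₁ l ≤ (1 - δ l) * P := by
      intro l
      by_cases h1 : l = j
      · subst h1
        simp only [ht₁def, if_pos rfl, ite_true, if_neg hjk]
        rw [hδTj]
        linarith [hdj1]
      · by_cases h2 : l = k
        · subst h2
          simp only [ht₁def, if_neg h1, if_pos rfl, ite_true]
          rw [neg_div]
          linarith [ht1 l, hdkpos]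
        · simp only [ht₁def, if_neg h1, if_neg h2]
          linarith [ht1 l]
    have ht₂0 : ∀ l, 0 ≤ t₂ l := by
      intro l
      by_cases h1 : l = j
      · subst h1
        simp only [ht₂def, if_pos rfl, ite_true, if_neg hjk]
        rw [neg_div]
        linarith [hdj2]
      · by_cases h2 : l = k
        · subst h2
          simp only [ht₂def, if_neg h1, if_pos rfl, ite_true]
          linarith [ht0 l, hdkpos]
        · simp only [ht₂def, if_neg h1, if_neg h2]
          linarith [ht0 l]
    have ht₂1 : ∀ l, t₂ l ≤ (1 - δ l) * P := by
      intro l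
      by_cases h1 : l = j
      · subst h1
        simp only [ht₂def, if_pos rfl, ite_true, if_neg hjk]
        rw [neg_div]
        linarith [ht1 l, hdjpos]
      · by_cases h2 : l = k
        · subst h2
          simp only [ht₂def, if_neg h1, if_pos rfl, ite_true]
          rw [hδTk]
          linarith [hdk1]
        · simp only [ht₂def, if_neg h1, if_neg h2]
          linarith [ht1 l]
    have hcon₁ : ∀ S ⊆ T, gq p 1 S ≤ ∑ i ∈ S, p i * t₁ i := by
      intro S hS
      rw [hsum₁ S]
      by_cases hjS : j ∈ S <;> by_cases hkS : k ∈ S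
      · rw [if_pos hjS, if_pos hkS]; linarith [hct S hS]
      · rw [if_pos hjS, if_neg hkS]; linarith [hct S hS, hε]
      · rw [if_neg hjS, if_pos hkS]
        have hnt : ∑ i ∈ S, p i * t i ≠ gq p 1 S :=
          fun heq => hjS (hkmin S ⟨hS, heq⟩ hkS hjA)
        linarith [hslack S hS hnt, hε1]
      · rw [if_neg hjS, if_neg hkS]; linarith [hct S hS]
    have hcon₂ : ∀ S ⊆ T, gq p 1 S ≤ ∑ i ∈ S, p i * t₂ i := by
      intro S hS
      rw [hsum₂ S]
      by_cases hjS : j ∈ S <;> by_cases hkS : k ∈ S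
      · rw [if_pos hjS, if_pos hkS]; linarith [hct S hS]
      · rw [if_pos hjS, if_neg hkS]
        have hnt : ∑ i ∈ S, p i * t i ≠ gq p 1 S :=
          fun heq => hkS (hjmin S ⟨hS, heq⟩ hjS hkA)
        linarith [hslack S hS hnt, hε1]
      · rw [if_neg hjS, if_pos hkS]; linarith [hct S hS, hε]
      · rw [if_neg hjS, if_neg hkS]; linarith [hct S hS]
    have hmem₁ : memP1 p e t₁ δ x :=
      memP1_intro hp hδ01 hxv hxc he0 he1 ht₁0 ht₁1 hce hcon₁
    have hmem₂ : memP1 p e t₂ δ x :=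
      memP1_intro hp hδ01 hxv hxc he0 he1 ht₂0 ht₂1 hce hcon₂
    have hmid : ∀ l, t l = (t₁ l + t₂ l) / 2 := by
      intro l
      simp only [ht₁def, ht₂def]
      split_ifs <;> ring
    obtain ⟨-, ht12, -, -⟩ := hexc e t₁ δ x e t₂ δ x hmem₁ hmem₂
      (fun l => by ring) hmid (fun l => by ring) (fun a b hab => by ring)
    have heval12 := congrFun ht12 j
    simp only [ht₁def, ht₂def, if_pos rfl, ite_true, if_neg hjk] at heval12
    rw [neg_div] at heval12
    linarith [hdjpos]
  have hcompE : ∀ j, j ∈ E → TightSet p E e (-1) ((Me j).erase j) := by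
    intro j hjE
    obtain ⟨hA, hjA, hjmin⟩ := hMe j hjE
    by_contra hnot
    obtain ⟨k, hkA, hkj, hkmin⟩ := exists_partner hp hce hA hjA hcovE hjmin hnot
    have hkE : k ∈ E := hA.1 hkA
    have hpj := hp j
    have hpk := hp k
    have hjk : j ≠ k := Ne.symm hkj
    have hej : 0 < e j := by
      rcases lt_or_eq_of_le (he0 j) with h | h
      · exact h
      · exfalso
        have hsing : TightSet p E e (-1) {j} :=
          ⟨Finset.singleton_subset_iff.mpr hjE, by
            rw [gq_singleton, Finset.sum_singleton, ← h]; ring⟩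
        have h1 : Me j ⊆ {j} := hjmin {j} hsing (Finset.mem_singleton_self j)
        have h2 : Me j = {j} := le_antisymm h1 (Finset.singleton_subset_iff.mpr hjA)
        apply hnot
        rw [h2, Finset.erase_singleton]
        exact tightSet_empty
    have hek : 0 < e k := by
      rcases lt_or_eq_of_le (he0 k) with h | h
      · exact h
      · exfalso
        have hsing : TightSet p E e (-1) {k} :=
          ⟨Finset.singleton_subset_iff.mpr hkE, by
            rw [gq_singleton, Finset.sum_singleton, ← h]; ring⟩
        have h1 : Me j ⊆ {k} := hkmin {k} hsing (Finset.mem_singleton_self k)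
        have h2 : j ∈ ({k} : Finset J) := h1 hjA
        rw [Finset.mem_singleton] at h2
        exact hjk h2
    have hsum_erase_univ : ∀ l : J, ∑ i ∈ Finset.univ.erase l, p i = P - p l := by
      intro l
      have := Finset.add_sum_erase Finset.univ p (Finset.mem_univ l)
      linarith
    have hejub : e j < P - p j := by
      have h := tight_mem_lt hce hA hjA hnot
      have h2 : ∑ i ∈ (Me j).erase j, p i ≤ P - p j := by
        have h3 := sum_p_mono hp
          (Finset.erase_subset_erase j (Finset.subset_univ (Me j)))
        rw [hsum_erase_univ j] at h3
        exact h3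
      have h4 : p j * e j < p j * (∑ i ∈ (Me j).erase j, p i) := by linarith
      have h5 : e j < ∑ i ∈ (Me j).erase j, p i := (mul_lt_mul_iff_right₀ hpj).mp h4
      linarith
    have hekub : e k < P - p k := by
      have hknot : ¬ TightSet p E e (-1) ((Me j).erase k) := by
        intro hk
        have hjin : j ∈ (Me j).erase k := Finset.mem_erase.mpr ⟨hjk, hjA⟩
        have h1 : Me j ⊆ (Me j).erase k := hjmin _ hk hjin
        exact (Finset.notMem_erase k (Me j)) (h1 hkA)
      have h := tight_mem_lt hce hA hkA hknot
      have h2 : ∑ i ∈ (Me j).erase k, p i ≤ P - p k := by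
        have h3 := sum_p_mono hp
          (Finset.erase_subset_erase k (Finset.subset_univ (Me j)))
        rw [hsum_erase_univ k] at h3
        exact h3
      have h4 : p k * e k < p k * (∑ i ∈ (Me j).erase k, p i) := by linarith
      have h5 : e k < ∑ i ∈ (Me j).erase k, p i := (mul_lt_mul_iff_right₀ hpk).mp h4
      linarith
    obtain ⟨ε₀, hε₀, hslack⟩ := exists_slack hce
    obtain ⟨ε, hε, hε1, hε2, hε3, hε4, hε5⟩ :
        ∃ ε : ℝ, 0 < ε ∧ ε ≤ ε₀ ∧ ε ≤ p j * (P - p j - e j) ∧ ε ≤ p k * (P - p k - e k)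
          ∧ ε ≤ p j * e j ∧ ε ≤ p k * e k :=
      ⟨min ε₀ (min (p j * (P - p j - e j)) (min (p k * (P - p k - e k))
          (min (p j * e j) (p k * e k)))),
        lt_min hε₀ (lt_min (mul_pos hpj (by linarith)) (lt_min (mul_pos hpk (by linarith))
          (lt_min (mul_pos hpj hej) (mul_pos hpk hek)))),
        min_le_left _ _,
        le_trans (min_le_right _ _) (min_le_left _ _),
        le_trans (min_le_right _ _) (le_trans (min_le_right _ _) (min_le_left _ _)),
        le_trans (min_le_right _ _) (le_trans (min_le_right _ _)
          (le_trans (min_le_right _ _) (min_le_left _ _))),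
        le_trans (min_le_right _ _) (le_trans (min_le_right _ _)
          (le_trans (min_le_right _ _) (min_le_right _ _)))⟩
    have hdj1 : ε / p j ≤ P - p j - e j := by
      rw [div_le_iff₀ hpj]; linarith [hε2, mul_comm (p j) (P - p j - e j)]
    have hdk1 : ε / p k ≤ P - p k - e k := by
      rw [div_le_iff₀ hpk]; linarith [hε3, mul_comm (p k) (P - p k - e k)]
    have hdj2 : ε / p j ≤ e j := by
      rw [div_le_iff₀ hpj]; linarith [hε4, mul_comm (p j) (e j)]
    have hdk2 : ε / p k ≤ e k := by
      rw [div_le_iff₀ hpk]; linarith [hε5, mul_comm (p k) (e k)]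
    have hdjpos : 0 < ε / p j := div_pos hε hpj
    have hdkpos : 0 < ε / p k := div_pos hε hpk
    set e₁ : J → ℝ := fun l => e l + ((if l = j then ε / p j else 0)
      + (if l = k then (-ε) / p k else 0)) with he₁def
    set e₂ : J → ℝ := fun l => e l + ((if l = j then (-ε) / p j else 0)
      + (if l = k then ε / p k else 0)) with he₂def
    have hsum₁ : ∀ S : Finset J, ∑ i ∈ S, p i * e₁ i
        = ∑ i ∈ S, p i * e i + ((if j ∈ S then ε else 0) + (if k ∈ S then -ε else 0)) :=
      fun S => sum_pert2 p e j k ε (-ε) S (ne_of_gt hpj) (ne_of_gt hpk) hjk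
    have hsum₂ : ∀ S : Finset J, ∑ i ∈ S, p i * e₂ i
        = ∑ i ∈ S, p i * e i + ((if j ∈ S then -ε else 0) + (if k ∈ S then ε else 0)) :=
      fun S => sum_pert2 p e j k (-ε) ε S (ne_of_gt hpj) (ne_of_gt hpk) hjk
    have hδEj : δ j = 1 := (hmemE j).mp hjE
    have hδEk : δ k = 1 := (hmemE k).mp hkE
    have he₁0 : ∀ l, 0 ≤ e₁ l := by
      intro l
      by_cases h1 : l = j
      · subst h1
        simp only [he₁def, if_pos rfl, ite_true, if_neg hjk]
        linarith [he0 l, hdjpos]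
      · by_cases h2 : l = k
        · subst h2
          simp only [he₁def, if_neg h1, if_pos rfl, ite_true]
          rw [neg_div]
          linarith [hdk2]
        · simp only [he₁def, if_neg h1, if_neg h2]
          linarith [he0 l]
    have he₁1 : ∀ l, e₁ l ≤ δ l * (P - p l) := by
      intro l
      by_cases h1 : l = j
      · subst h1
        simp only [he₁def, if_pos rfl, ite_true, if_neg hjk]
        rw [hδEj]
        linarith [hdj1]
      · by_cases h2 : l = k
        · subst h2
          simp only [he₁def, if_neg h1, if_pos rfl, ite_true]
          rw [neg_div]
          linarith [he1 l, hdkpos]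
        · simp only [he₁def, if_neg h1, if_neg h2]
          linarith [he1 l]
    have he₂0 : ∀ l, 0 ≤ e₂ l := by
      intro l
      by_cases h1 : l = j
      · subst h1
        simp only [he₂def, if_pos rfl, ite_true, if_neg hjk]
        rw [neg_div]
        linarith [hdj2]
      · by_cases h2 : l = k
        · subst h2
          simp only [he₂def, if_neg h1, if_pos rfl, ite_true]
          linarith [he0 l, hdkpos]
        · simp only [he₂def, if_neg h1, if_neg h2]
          linarith [he0 l]
    have he₂1 : ∀ l, e₂ l ≤ δ l * (P - p l) := by
      intro l
      by_cases h1 : l = j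
      · subst h1
        simp only [he₂def, if_pos rfl, ite_true, if_neg hjk]
        rw [neg_div]
        linarith [he1 l, hdjpos]
      · by_cases h2 : l = k
        · subst h2
          simp only [he₂def, if_neg h1, if_pos rfl, ite_true]
          rw [hδEk]
          linarith [hdk1]
        · simp only [he₂def, if_neg h1, if_neg h2]
          linarith [he1 l]
    have hcon₁ : ∀ S ⊆ E, gq p (-1) S ≤ ∑ i ∈ S, p i * e₁ i := by
      intro S hS
      rw [hsum₁ S]
      by_cases hjS : j ∈ S <;> by_cases hkS : k ∈ S
      · rw [if_pos hjS, if_pos hkS]; linarith [hce S hS]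
      · rw [if_pos hjS, if_neg hkS]; linarith [hce S hS, hε]
      · rw [if_neg hjS, if_pos hkS]
        have hnt : ∑ i ∈ S, p i * e i ≠ gq p (-1) S :=
          fun heq => hjS (hkmin S ⟨hS, heq⟩ hkS hjA)
        linarith [hslack S hS hnt, hε1]
      · rw [if_neg hjS, if_neg hkS]; linarith [hce S hS]
    have hcon₂ : ∀ S ⊆ E, gq p (-1) S ≤ ∑ i ∈ S, p i * e₂ i := by
      intro S hS
      rw [hsum₂ S]
      by_cases hjS : j ∈ S <;> by_cases hkS : k ∈ S
      · rw [if_pos hjS, if_pos hkS]; linarith [hce S hS]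
      · rw [if_pos hjS, if_neg hkS]
        have hnt : ∑ i ∈ S, p i * e i ≠ gq p (-1) S :=
          fun heq => hkS (hjmin S ⟨hS, heq⟩ hjS hkA)
        linarith [hslack S hS hnt, hε1]
      · rw [if_neg hjS, if_pos hkS]; linarith [hce S hS, hε]
      · rw [if_neg hjS, if_neg hkS]; linarith [hce S hS]
    have hmem₁ : memP1 p e₁ t δ x :=
      memP1_intro hp hδ01 hxv hxc he₁0 he₁1 ht0 ht1 hcon₁ hct
    have hmem₂ : memP1 p e₂ t δ x :=
      memP1_intro hp hδ01 hxv hxc he₂0 he₂1 ht0 ht1 hcon₂ hct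
    have hmid : ∀ l, e l = (e₁ l + e₂ l) / 2 := by
      intro l
      simp only [he₁def, he₂def]
      split_ifs <;> ring
    obtain ⟨he12, -, -, -⟩ := hexc e₁ t δ x e₂ t δ x hmem₁ hmem₂
      hmid (fun l => by ring) (fun l => by ring) (fun a b hab => by ring)
    have heval12 := congrFun he12 j
    simp only [he₁def, he₂def, if_pos rfl, ite_true, if_neg hjk] at heval12
    rw [neg_div] at heval12
    linarith [hdjpos]
  -- Step E : values
  have htval : ∀ j ∈ T, t j = ∑ i ∈ Mt j, p i := by
    intro j hj
    obtain ⟨hA, hjA, _⟩ := hMt j hj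
    have h := tight_erase_val hA hjA (hcompT j hj)
    have h2 : ∑ i ∈ Mt j, p i = p j + ∑ i ∈ (Mt j).erase j, p i :=
      (Finset.add_sum_erase _ p hjA).symm
    have hpj := hp j
    have : t j = ∑ i ∈ (Mt j).erase j, p i + p j := by
      field_simp at h
      nlinarith
    rw [this, h2]; ring
  have heval : ∀ j ∈ E, e j = ∑ i ∈ (Me j).erase j, p i := by
    intro j hj
    obtain ⟨hA, hjA, _⟩ := hMe j hj
    have h := tight_erase_val hA hjA (hcompE j hj)
    have h2 : p j * e j = p j * ∑ i ∈ (Me j).erase j, p i := by rw [h]; ring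
    exact mul_left_cancel₀ (ne_of_gt (hp j)) h2
  -- Step F : ordering
  have hordT : ∀ i ∈ T, ∀ j ∈ T, i ≠ j → Mt i ⊆ Mt j → t i + p j ≤ t j := by
    intro i hi j hj hij hsub
    obtain ⟨hAi, hiA, himin⟩ := hMt i hi
    obtain ⟨hAj, hjA, hjmin⟩ := hMt j hj
    have hjnot : j ∉ Mt i := by
      intro hjin
      have h1 : Mt j ⊆ Mt i := hjmin _ hAi hjin
      have heq : Mt i = Mt j := le_antisymm hsub h1
      have h2 := hcompT i hi
      have h3 : j ∈ (Mt i).erase i := Finset.mem_erase.mpr ⟨Ne.symm hij, hjin⟩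
      have h4 : Mt j ⊆ (Mt i).erase i := hjmin _ h2 h3
      have h5 : i ∈ (Mt i).erase i := h4 (heq ▸ hiA)
      exact (Finset.notMem_erase i (Mt i)) h5
    have hsub2 : Mt i ⊆ (Mt j).erase j := Finset.subset_erase.mpr ⟨hsub, hjnot⟩
    have h5 : ∑ l ∈ Mt i, p l ≤ ∑ l ∈ (Mt j).erase j, p l := sum_p_mono hp hsub2
    have h6 : p j + ∑ l ∈ (Mt j).erase j, p l = ∑ l ∈ Mt j, p l :=
      Finset.add_sum_erase _ p hjA
    rw [htval i hi, htval j hj]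
    linarith
  have hordE : ∀ i ∈ E, ∀ j ∈ E, i ≠ j → Me i ⊆ Me j → e i + p i ≤ e j := by
    intro i hi j hj hij hsub
    obtain ⟨hAi, hiA, himin⟩ := hMe i hi
    obtain ⟨hAj, hjA, hjmin⟩ := hMe j hj
    have hjnot : j ∉ Me i := by
      intro hjin
      have h1 : Me j ⊆ Me i := hjmin _ hAi hjin
      have heq : Me i = Me j := le_antisymm hsub h1
      have h2 := hcompE i hi
      have h3 : j ∈ (Me i).erase i := Finset.mem_erase.mpr ⟨Ne.symm hij, hjin⟩
      have h4 : Me j ⊆ (Me i).erase i := hjmin _ h2 h3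
      have h5 : i ∈ (Me i).erase i := h4 (heq ▸ hiA)
      exact (Finset.notMem_erase i (Me i)) h5
    have hsub2 : Me i ⊆ (Me j).erase j := Finset.subset_erase.mpr ⟨hsub, hjnot⟩
    have h5 : ∑ l ∈ Me i, p l ≤ ∑ l ∈ (Me j).erase j, p l := sum_p_mono hp hsub2
    have h6 : p i + ∑ l ∈ (Me i).erase i, p l = ∑ l ∈ Me i, p l :=
      Finset.add_sum_erase _ p hiA
    rw [heval i hi, heval j hj]
    linarith
  -- Step G : extremal tasks
  have hbote : ∃ j₀ ∈ E, e j₀ = 0 := by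
    obtain ⟨j, hjE, hmincard⟩ := Finset.exists_min_image E (fun j => (Me j).card) hEne
    obtain ⟨hA, hjA, hjmin⟩ := hMe j hjE
    have htight := hcompE j hjE
    have hempty : (Me j).erase j = ∅ := by
      by_contra hne
      obtain ⟨l, hl⟩ := Finset.nonempty_iff_ne_empty.mpr hne
      have hlE : l ∈ E := htight.1 hl
      obtain ⟨hAl, hlA, hlmin⟩ := hMe l hlE
      have h1 : Me l ⊆ (Me j).erase j := hlmin _ htight hl
      have h2 : (Me l).card ≤ ((Me j).erase j).card := Finset.card_le_card h1
      have h3 : ((Me j).erase j).card < (Me j).card := Finset.card_erase_lt_of_mem hjA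
      have h4 := hmincard l hlE
      omega
    refine ⟨j, hjE, ?_⟩
    rw [heval j hjE, hempty, Finset.sum_empty]
  have htope : ∃ k ∈ E, e k + p k = ∑ i ∈ E, p i := by
    obtain ⟨a, ha, hamax⟩ := chain_max E hEne Me (fun a ha b hb =>
      tight_comparable hp hce (hMe a ha).1 (hMe b hb).1)
    obtain ⟨hA, haA, hamin⟩ := hMe a ha
    have hMaE : Me a = E := le_antisymm hA.1 (fun b hb => hamax b hb ((hMe b hb).2.1))
    refine ⟨a, ha, ?_⟩
    rw [heval a ha, hMaE]
    have h2 : p a + ∑ i ∈ (Me a).erase a, p i = ∑ i ∈ Me a, p i :=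
      Finset.add_sum_erase _ p haA
    rw [hMaE] at h2
    linarith
  have htopt : T.Nonempty → ∃ k ∈ T, t k = ∑ i ∈ T, p i := by
    intro hTne
    obtain ⟨a, ha, hamax⟩ := chain_max T hTne Mt (fun a ha b hb =>
      tight_comparable hp hct (hMt a ha).1 (hMt b hb).1)
    obtain ⟨hA, haA, hamin⟩ := hMt a ha
    have hMaT : Mt a = T := le_antisymm hA.1 (fun b hb => hamax b hb ((hMt b hb).2.1))
    refine ⟨a, ha, ?_⟩
    rw [htval a ha, hMaT]
  -- bounds
  have heub : ∀ j ∈ E, e j + p j ≤ ∑ i ∈ E, p i := by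
    intro j hj
    obtain ⟨hA, hjA, _⟩ := hMe j hj
    rw [heval j hj]
    have h2 : ∑ i ∈ (Me j).erase j, p i + p j = ∑ i ∈ Me j, p i := by
      have := Finset.add_sum_erase _ p hjA
      linarith [this]
    rw [h2]
    exact sum_p_mono hp hA.1
  have htub : ∀ j ∈ T, t j ≤ ∑ i ∈ T, p i := by
    intro j hj
    obtain ⟨hA, hjA, _⟩ := hMt j hj
    rw [htval j hj]
    exact sum_p_mono hp hA.1
  have hEsum_nonneg : (0:ℝ) ≤ ∑ i ∈ E, p i :=
    Finset.sum_nonneg (fun i _ => (hp i).le)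
  have hTsum_nonneg : (0:ℝ) ≤ ∑ i ∈ T, p i :=
    Finset.sum_nonneg (fun i _ => (hp i).le)
  obtain ⟨j₀, hj₀E, hj₀⟩ := hbote
  have hCj₀ : d - e j₀ + t j₀ = d := by
    rw [hj₀, htE j₀ hj₀E]; ring
  refine ⟨⟨⟨?_, ?_⟩, ?_⟩, ⟨j₀, hCj₀⟩⟩
  · -- feasibility : p j ≤ C j
    intro j
    rcases hjET j with hj | hj
    · have h1 := heub j hj
      have h2 : ∑ i ∈ E, p i ≤ P := by rw [hsplit]; linarith
      have := htE j hj
      simp only [this]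
      linarith
    · have := heT j hj
      have h2 := htlb j hj
      simp only [this]
      linarith [hPub j]
  · -- non-overlap
    intro i j hij
    rcases hjET i with hi | hi <;> rcases hjET j with hj | hj
    · -- both early
      obtain ⟨hAi, hiA, _⟩ := hMe i hi
      obtain ⟨hAj, hjA, _⟩ := hMe j hj
      rcases tight_comparable hp hce hAi hAj with h | h
      · right
        have := hordE i hi j hj hij h
        have hti := htE i hi
        have htj := htE j hj
        simp only [hti, htj]
        linarith
      · left
        have := hordE j hj i hi (Ne.symm hij) h
        have hti := htE i hi
        have htj := htE j hj
        simp only [hti, htj]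
        linarith
    · -- i early, j tardy
      left
      have h1 := htlb j hj
      have h2 := he0 i
      have hti := htE i hi
      have hej := heT j hj
      simp only [hti, hej]
      linarith
    · -- i tardy, j early
      right
      have h1 := htlb i hi
      have h2 := he0 j
      have htj := htE j hj
      have hei := heT i hi
      simp only [htj, hei]
      linarith
    · -- both tardy
      obtain ⟨hAi, hiA, _⟩ := hMt i hi
      obtain ⟨hAj, hjA, _⟩ := hMt j hj
      rcases tight_comparable hp hct hAi hAj with h | h
      · left
        have := hordT i hi j hj hij h
        have hei := heT i hi
        have hej := heT j hj
        simp only [hei, hej]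
        linarith
      · right
        have := hordT j hj i hi (Ne.symm hij) h
        have hei := heT i hi
        have hej := heT j hj
        simp only [hei, hej]
        linarith
  · -- no idle time
    have hsup : Finset.univ.sup' Finset.univ_nonempty (fun j => d - e j + t j)
        = d + ∑ i ∈ T, p i := by
      apply le_antisymm
      · apply Finset.sup'_le
        intro j _
        rcases hjET j with hj | hj
        · have := htE j hj
          have := he0 j
          simp only [htE j hj]
          linarith
        · have := heT j hj
          have := htub j hj
          simp only [heT j hj]
          linarith
      · rcases Finset.eq_empty_or_nonempty T with hT | hT
        · have : ∑ i ∈ T, p i = 0 := by rw [hT]; simp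
          rw [this]
          calc d + 0 = d - e j₀ + t j₀ := by rw [hCj₀]; ring
            _ ≤ _ := by exact Finset.le_sup' (fun j => d - e j + t j) (Finset.mem_univ j₀)
        · obtain ⟨k, hkT, hk⟩ := htopt hT
          calc d + ∑ i ∈ T, p i = d - e k + t k := by
                rw [hk, heT k hkT]; ring
            _ ≤ _ := by exact Finset.le_sup' (fun j => d - e j + t j) (Finset.mem_univ k)
    have hinf : Finset.univ.inf' Finset.univ_nonempty (fun j => (d - e j + t j) - p j)
        = d - ∑ i ∈ E, p i := by
      apply le_antisymm
      · obtain ⟨k, hkE, hk⟩ := htope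
        calc Finset.univ.inf' Finset.univ_nonempty (fun j => (d - e j + t j) - p j)
            ≤ (d - e k + t k) - p k := by exact Finset.inf'_le (fun j => (d - e j + t j) - p j) (Finset.mem_univ k)
          _ = d - ∑ i ∈ E, p i := by rw [htE k hkE, ← hk]; ring
      · apply Finset.le_inf'
        intro j _
        rcases hjET j with hj | hj
        · have h1 := heub j hj
          have := htE j hj
          simp only [htE j hj]
          linarith
        · have h1 := htlb j hj
          have := heT j hj
          simp only [heT j hj]
          linarith
    rw [hsup, hinf, ← hPdef, hsplit]
    ring
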